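/- On (ℂ²_{A₁} ⊗ ℂ²_{B₁}) ⊗ (ℂ²_{A₂} ⊗ ℂ²_{C₁}) ⊗ (ℂ²_{B₂} ⊗ ℂ²_{C₂}), let W = 𝟙⊗𝟙⊗φ⁺ + 𝟙⊗φ⁺⊗𝟙 + φ⁺⊗𝟙⊗𝟙 − 𝟙⊗φ⁺⊗φ⁺ − φ⁺⊗φ⁺⊗𝟙 − φ⁺⊗𝟙⊗φ⁺ − 3·φ⁺⊗φ⁺⊗φ⁺, where the three tensor slots act on A₁B₁, A₂C₁, B₂C₂ respectively and φ⁺ is the projector onto (|00⟩+|11⟩)/√2. Then for each M ∈ {A, B, C} (with A = A₁A₂, B = B₁B₂, C = C₁C₂) there exist positive semidefinite matrices P_M and Q_M such that W = P_M + Q_M^{Γ_M}, where Γ_M denotes partial transposition with respect to the qubit factors held by M. (Consequently W is a fully decomposable genuine-multipartite-entanglement witness for the tripartition A|B|C.) -/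

import Mathlib

open scoped BigOperators ComplexOrder

noncomputable section

/-- Projector onto the `d`-dimensional maximally entangled state
`|φ⁺_d⟩ = (1/√d) ∑ᵢ |ii⟩`, as a matrix on `ℂ^d ⊗ ℂ^d`. -/
def phiPlus (d : ℕ) : Matrix (Fin d × Fin d) (Fin d × Fin d) ℂ :=
  fun x y => if x.1 = x.2 ∧ y.1 = y.2 then (1 / (d : ℂ)) else 0

/-- The `d`-dimensional isotropic state with visibility `p`:
`ρ(p) = p φ⁺_d + (1-p) 𝟙/d²`. -/
def iso (d : ℕ) (p : ℝ) : Matrix (Fin d × Fin d) (Fin d × Fin d) ℂ :=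
  (p : ℂ) • phiPlus d +
    (((1 - p) / (d : ℝ) ^ 2 : ℝ) : ℂ) • (1 : Matrix (Fin d × Fin d) (Fin d × Fin d) ℂ)

/-- The (possibly unnormalized) projector `|ψ⟩⟨ψ|` onto a vector `ψ`. -/
def vecProj {ι : Type} (ψ : ι → ℂ) : Matrix ι ι ℂ :=
  fun i j => ψ i * (starRingEnd ℂ) (ψ j)

/-- `m₁ ⊗ m₂ ⊗ m₃` on the six-qubit space, the factors acting on qubit pairs
`(0,1), (2,3), (4,5)` = `A₁B₁, A₂C₁, B₂C₂`. -/
def sl3 (m₁ m₂ m₃ : Matrix (Fin 2 × Fin 2) (Fin 2 × Fin 2) ℂ) :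
    Matrix (Fin 6 → Fin 2) (Fin 6 → Fin 2) ℂ :=
  fun x y => m₁ (x 0, x 1) (y 0, y 1) * m₂ (x 2, x 3) (y 2, y 3) * m₃ (x 4, x 5) (y 4, y 5)

/-- Partial transposition with respect to the qubits in `S`. -/
def ptr {n : ℕ} (S : Finset (Fin n))
    (X : Matrix (Fin n → Fin 2) (Fin n → Fin 2) ℂ) :
    Matrix (Fin n → Fin 2) (Fin n → Fin 2) ℂ :=
  fun x y => X (fun c => if c ∈ S then y c else x c) (fun c => if c ∈ S then x c else y c)

/-- The GME witness
`W = 𝟙𝟙φ⁺ + 𝟙φ⁺𝟙 + φ⁺𝟙𝟙 − 𝟙φ⁺φ⁺ − φ⁺φ⁺𝟙 − φ⁺𝟙φ⁺ − 3 φ⁺φ⁺φ⁺` on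
`ℂ²_{A₁} ⊗ ℂ²_{B₁} ⊗ ℂ²_{A₂} ⊗ ℂ²_{C₁} ⊗ ℂ²_{B₂} ⊗ ℂ²_{C₂}`
(qubits `0,…,5` = `A₁,B₁,A₂,C₁,B₂,C₂`). -/
noncomputable def Wcc : Matrix (Fin 6 → Fin 2) (Fin 6 → Fin 2) ℂ :=
  sl3 1 1 (phiPlus 2) + sl3 1 (phiPlus 2) 1 + sl3 (phiPlus 2) 1 1
    - sl3 1 (phiPlus 2) (phiPlus 2) - sl3 (phiPlus 2) (phiPlus 2) 1
    - sl3 (phiPlus 2) 1 (phiPlus 2)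
    - (3 : ℂ) • sl3 (phiPlus 2) (phiPlus 2) (phiPlus 2)

open Matrix

abbrev M4 := Matrix (Fin 2 × Fin 2) (Fin 2 × Fin 2) ℂ
abbrev QQ := Fin 2 × Fin 2

lemma psd_smul {ι : Type} [Fintype ι] {M : Matrix ι ι ℂ} (hM : M.PosSemidef)
    {c : ℂ} (hc : 0 ≤ c) : (c • M).PosSemidef := by
  have hcr : star c = c := by
    rw [Complex.le_def] at hc
    apply Complex.ext <;> simp [Complex.star_def, ← hc.2]
  refine .of_dotProduct_mulVec_nonneg ?_ fun x => ?_
  · unfold Matrix.IsHermitian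
    rw [Matrix.conjTranspose_smul, hM.1.eq, hcr]
  · rw [Matrix.smul_mulVec, dotProduct_smul, smul_eq_mul]
    exact mul_nonneg hc (hM.dotProduct_mulVec_nonneg x)

lemma vecProj_psd {ι : Type} [Fintype ι] [DecidableEq ι] (ψ : ι → ℂ) :
    (vecProj ψ).PosSemidef := by
  let B : Matrix (Fin 1) ι ℂ := Matrix.of fun _ j => (starRingEnd ℂ) (ψ j)
  have h : vecProj ψ = Bᴴ * B := by
    funext i j
    simp [B, vecProj, Matrix.mul_apply, Matrix.conjTranspose_apply, Fin.sum_univ_one]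
  rw [h]
  exact Matrix.posSemidef_conjTranspose_mul_self _

-- trilinearity
lemma sl3_add₁ (A A' B C : M4) : sl3 (A + A') B C = sl3 A B C + sl3 A' B C := by
  funext x y; simp [sl3, Matrix.add_apply]; ring
lemma sl3_add₂ (A B B' C : M4) : sl3 A (B + B') C = sl3 A B C + sl3 A B' C := by
  funext x y; simp [sl3, Matrix.add_apply]; ring
lemma sl3_add₃ (A B C C' : M4) : sl3 A B (C + C') = sl3 A B C + sl3 A B C' := by
  funext x y; simp [sl3, Matrix.add_apply]; ring
lemma sl3_sub₁ (A A' B C : M4) : sl3 (A - A') B C = sl3 A B C - sl3 A' B C := by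
  funext x y; simp [sl3, Matrix.sub_apply]; ring
lemma sl3_sub₂ (A B B' C : M4) : sl3 A (B - B') C = sl3 A B C - sl3 A B' C := by
  funext x y; simp [sl3, Matrix.sub_apply]; ring
lemma sl3_sub₃ (A B C C' : M4) : sl3 A B (C - C') = sl3 A B C - sl3 A B C' := by
  funext x y; simp [sl3, Matrix.sub_apply]; ring
lemma sl3_smul₁ (c : ℂ) (A B C : M4) : sl3 (c • A) B C = c • sl3 A B C := by
  funext x y; simp [sl3, Matrix.smul_apply]; ring
lemma sl3_smul₂ (c : ℂ) (A B C : M4) : sl3 A (c • B) C = c • sl3 A B C := by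
  funext x y; simp [sl3, Matrix.smul_apply]; ring
lemma sl3_smul₃ (c : ℂ) (A B C : M4) : sl3 A B (c • C) = c • sl3 A B C := by
  funext x y; simp [sl3, Matrix.smul_apply]; ring

-- factorization equiv
def tripEquiv : (QQ × QQ × QQ) ≃ (Fin 6 → Fin 2) where
  toFun t := ![t.1.1, t.1.2, t.2.1.1, t.2.1.2, t.2.2.1, t.2.2.2]
  invFun w := ((w 0, w 1), (w 2, w 3), (w 4, w 5))
  left_inv t := rfl
  right_inv w := by funext k; fin_cases k <;> rfl

lemma sum_factor (f g h : QQ → ℂ) :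
    (∑ w : (Fin 6 → Fin 2), f (w 0, w 1) * g (w 2, w 3) * h (w 4, w 5)) =
      (∑ a, f a) * (∑ b, g b) * (∑ c, h c) := by
  rw [← tripEquiv.sum_comp (fun w => f (w 0, w 1) * g (w 2, w 3) * h (w 4, w 5))]
  have h1 : ∀ t : QQ × QQ × QQ,
      f (tripEquiv t 0, tripEquiv t 1) * g (tripEquiv t 2, tripEquiv t 3) *
        h (tripEquiv t 4, tripEquiv t 5) = f t.1 * g t.2.1 * h t.2.2 := fun t => rfl
  simp only [h1]
  simp_rw [Fintype.sum_prod_type, mul_assoc, ← Finset.mul_sum, ← Finset.sum_mul]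

lemma sl3_factor (X Y Z : M4) :
    sl3 (Xᴴ * X) (Yᴴ * Y) (Zᴴ * Z) = (sl3 X Y Z)ᴴ * sl3 X Y Z := by
  funext x y
  have : ((sl3 X Y Z)ᴴ * sl3 X Y Z) x y =
      ∑ w : (Fin 6 → Fin 2),
        ((starRingEnd ℂ) (X (w 0, w 1) (x 0, x 1)) * X (w 0, w 1) (y 0, y 1)) *
        ((starRingEnd ℂ) (Y (w 2, w 3) (x 2, x 3)) * Y (w 2, w 3) (y 2, y 3)) *
        ((starRingEnd ℂ) (Z (w 4, w 5) (x 4, x 5)) * Z (w 4, w 5) (y 4, y 5)) := by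
    rw [Matrix.mul_apply]
    refine Finset.sum_congr rfl fun w _ => ?_
    simp [sl3, Matrix.conjTranspose_apply, _root_.map_mul]
    ring
  rw [this, sum_factor (fun p => (starRingEnd ℂ) (X p (x 0, x 1)) * X p (y 0, y 1))
    (fun p => (starRingEnd ℂ) (Y p (x 2, x 3)) * Y p (y 2, y 3))
    (fun p => (starRingEnd ℂ) (Z p (x 4, x 5)) * Z p (y 4, y 5))]
  simp [sl3, Matrix.mul_apply, Matrix.conjTranspose_apply]

lemma psd_eq_ct_mul {A : M4} (hA : A.PosSemidef) : ∃ X : M4, A = Xᴴ * X := by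
  open scoped MatrixOrder in
  obtain ⟨X, hX⟩ := CStarAlgebra.nonneg_iff_eq_star_mul_self.mp hA.nonneg
  exact ⟨X, hX⟩

lemma sl3_psd {A B C : M4} (hA : A.PosSemidef) (hB : B.PosSemidef) (hC : C.PosSemidef) :
    (sl3 A B C).PosSemidef := by
  obtain ⟨X, rfl⟩ := psd_eq_ct_mul hA
  obtain ⟨Y, rfl⟩ := psd_eq_ct_mul hB
  obtain ⟨Z, rfl⟩ := psd_eq_ct_mul hC
  rw [sl3_factor]
  exact Matrix.posSemidef_conjTranspose_mul_self _

-- slot matrices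
def swp : M4 := fun x y => if x.1 = y.2 ∧ x.2 = y.1 then 1 else 0
def gM : M4 := (1/2 : ℂ) • ((1 : M4) + swp)
def sM : M4 := (1/2 : ℂ) • ((1 : M4) - swp)
def rM : M4 := 1 - phiPlus 2

def vu : QQ → ℂ := fun p => if p.1 = p.2 then 1 else 0
def va : QQ → ℂ := fun p => if p = (0,0) then 1 else if p = (1,1) then -1 else 0
def vb : QQ → ℂ := fun p => if p.1 ≠ p.2 then 1 else 0
def vs : QQ → ℂ := fun p => if p = (0,1) then 1 else if p = (1,0) then -1 else 0

lemma hhalf : (0 : ℂ) ≤ 1/2 := by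
  rw [Complex.le_def]; norm_num
lemma htwo : (0 : ℂ) ≤ 2 := by
  rw [Complex.le_def]; norm_num

lemma ph_eq : phiPlus 2 = (1/2 : ℂ) • vecProj vu := by
  funext x y
  obtain ⟨i, j⟩ := x; obtain ⟨k, l⟩ := y
  fin_cases i <;> fin_cases j <;> fin_cases k <;> fin_cases l <;>
    norm_num [phiPlus, vecProj, vu, Matrix.smul_apply]

lemma rM_eq : rM = (1/2 : ℂ) • (vecProj va + vecProj vb + vecProj vs) := by
  funext x y
  obtain ⟨i, j⟩ := x; obtain ⟨k, l⟩ := y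
  fin_cases i <;> fin_cases j <;> fin_cases k <;> fin_cases l <;>
    norm_num [rM, phiPlus, vecProj, va, vb, vs, Matrix.smul_apply, Matrix.sub_apply,
      Matrix.add_apply, Matrix.one_apply, Prod.ext_iff]

lemma gM_eq : gM = (1/2 : ℂ) • (vecProj vu + vecProj va + vecProj vb) := by
  funext x y
  obtain ⟨i, j⟩ := x; obtain ⟨k, l⟩ := y
  fin_cases i <;> fin_cases j <;> fin_cases k <;> fin_cases l <;>
    norm_num [gM, swp, vecProj, vu, va, vb, Matrix.smul_apply, Matrix.add_apply,
      Matrix.one_apply, Prod.ext_iff]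

lemma sM_eq : sM = (1/2 : ℂ) • vecProj vs := by
  funext x y
  obtain ⟨i, j⟩ := x; obtain ⟨k, l⟩ := y
  fin_cases i <;> fin_cases j <;> fin_cases k <;> fin_cases l <;>
    norm_num [sM, swp, vecProj, vs, Matrix.smul_apply, Matrix.sub_apply,
      Matrix.one_apply, Prod.ext_iff]

lemma ph_psd : (phiPlus 2).PosSemidef := by
  rw [ph_eq]; exact psd_smul (vecProj_psd vu) hhalf
lemma rM_psd : rM.PosSemidef := by
  rw [rM_eq]
  exact psd_smul (((vecProj_psd va).add (vecProj_psd vb)).add (vecProj_psd vs)) hhalf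
lemma gM_psd : gM.PosSemidef := by
  rw [gM_eq]
  exact psd_smul (((vecProj_psd vu).add (vecProj_psd va)).add (vecProj_psd vb)) hhalf
lemma sM_psd : sM.PosSemidef := by
  rw [sM_eq]; exact psd_smul (vecProj_psd vs) hhalf
lemma one_psd : (1 : M4).PosSemidef := Matrix.PosSemidef.one

-- partial transposes
def tau1 (A : M4) : M4 := fun x y => A (y.1, x.2) (x.1, y.2)
def tau2 (A : M4) : M4 := fun x y => A (x.1, y.2) (y.1, x.2)

lemma ptr02 (A B C : M4) : ptr {0, 2} (sl3 A B C) = sl3 (tau1 A) (tau1 B) C := by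
  funext x y
  simp [ptr, sl3, tau1, Finset.mem_insert, Finset.mem_singleton]

lemma ptr14 (A B C : M4) : ptr {1, 4} (sl3 A B C) = sl3 (tau2 A) B (tau1 C) := by
  funext x y
  simp [ptr, sl3, tau1, tau2, Finset.mem_insert, Finset.mem_singleton]

lemma ptr35 (A B C : M4) : ptr {3, 5} (sl3 A B C) = sl3 A (tau2 B) (tau2 C) := by
  funext x y
  simp [ptr, sl3, tau2, Finset.mem_insert, Finset.mem_singleton]

lemma tau1_g : tau1 gM = (1/2 : ℂ) • 1 + phiPlus 2 := by
  funext x y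
  obtain ⟨i, j⟩ := x; obtain ⟨k, l⟩ := y
  fin_cases i <;> fin_cases j <;> fin_cases k <;> fin_cases l <;>
    norm_num [tau1, gM, swp, phiPlus, Matrix.smul_apply, Matrix.add_apply,
      Matrix.one_apply, Prod.ext_iff]

lemma tau1_s : tau1 sM = (1/2 : ℂ) • 1 - phiPlus 2 := by
  funext x y
  obtain ⟨i, j⟩ := x; obtain ⟨k, l⟩ := y
  fin_cases i <;> fin_cases j <;> fin_cases k <;> fin_cases l <;>
    norm_num [tau1, sM, swp, phiPlus, Matrix.smul_apply, Matrix.sub_apply,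
      Matrix.add_apply, Matrix.one_apply, Prod.ext_iff]

lemma tau2_g : tau2 gM = (1/2 : ℂ) • 1 + phiPlus 2 := by
  funext x y
  obtain ⟨i, j⟩ := x; obtain ⟨k, l⟩ := y
  fin_cases i <;> fin_cases j <;> fin_cases k <;> fin_cases l <;>
    norm_num [tau2, gM, swp, phiPlus, Matrix.smul_apply, Matrix.add_apply,
      Matrix.one_apply, Prod.ext_iff]

lemma tau2_s : tau2 sM = (1/2 : ℂ) • 1 - phiPlus 2 := by
  funext x y
  obtain ⟨i, j⟩ := x; obtain ⟨k, l⟩ := y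
  fin_cases i <;> fin_cases j <;> fin_cases k <;> fin_cases l <;>
    norm_num [tau2, sM, swp, phiPlus, Matrix.smul_apply, Matrix.sub_apply,
      Matrix.add_apply, Matrix.one_apply, Prod.ext_iff]

lemma ptr_add {n : ℕ} (S : Finset (Fin n)) (X Y) :
    ptr S (X + Y) = ptr S X + ptr S Y := rfl
lemma ptr_smul {n : ℕ} (S : Finset (Fin n)) (c : ℂ) (X) :
    ptr S (c • X) = c • ptr S X := rfl

/-- For each party `M ∈ {A, B, C}` (with `A` holding qubits `0, 2`, `B` qubits `1, 4`,
and `C` qubits `3, 5`) there are positive semidefinite `P_M, Q_M` with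
`W = P_M + Q_M^{Γ_M}`; hence `W` is a fully decomposable GME witness for the
tripartition `A|B|C`. -/
theorem Wcc_fully_decomposable :
    (∃ P Q : Matrix (Fin 6 → Fin 2) (Fin 6 → Fin 2) ℂ,
        P.PosSemidef ∧ Q.PosSemidef ∧ Wcc = P + ptr {0, 2} Q) ∧
    (∃ P Q : Matrix (Fin 6 → Fin 2) (Fin 6 → Fin 2) ℂ,
        P.PosSemidef ∧ Q.PosSemidef ∧ Wcc = P + ptr {1, 4} Q) ∧
    (∃ P Q : Matrix (Fin 6 → Fin 2) (Fin 6 → Fin 2) ℂ,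
        P.PosSemidef ∧ Q.PosSemidef ∧ Wcc = P + ptr {3, 5} Q) := by
  refine ⟨⟨sl3 (phiPlus 2) 1 rM + sl3 rM (phiPlus 2) rM,
      (2 : ℂ) • (sl3 gM sM (phiPlus 2) + sl3 sM gM (phiPlus 2)), ?_, ?_, ?_⟩,
    ⟨sl3 (phiPlus 2) rM 1 + sl3 rM rM (phiPlus 2),
      (2 : ℂ) • (sl3 gM (phiPlus 2) sM + sl3 sM (phiPlus 2) gM), ?_, ?_, ?_⟩,
    ⟨sl3 rM (phiPlus 2) 1 + sl3 rM rM (phiPlus 2),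
      (2 : ℂ) • (sl3 (phiPlus 2) gM sM + sl3 (phiPlus 2) sM gM), ?_, ?_, ?_⟩⟩
  · exact (sl3_psd ph_psd one_psd rM_psd).add (sl3_psd rM_psd ph_psd rM_psd)
  · exact psd_smul ((sl3_psd gM_psd sM_psd ph_psd).add (sl3_psd sM_psd gM_psd ph_psd)) htwo
  · rw [ptr_smul, ptr_add, ptr02, ptr02, tau1_g, tau1_s]
    unfold Wcc rM
    simp only [sl3_add₁, sl3_add₂, sl3_add₃, sl3_sub₁, sl3_sub₂, sl3_sub₃,
      sl3_smul₁, sl3_smul₂, sl3_smul₃]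
    module
  · exact (sl3_psd ph_psd rM_psd one_psd).add (sl3_psd rM_psd rM_psd ph_psd)
  · exact psd_smul ((sl3_psd gM_psd ph_psd sM_psd).add (sl3_psd sM_psd ph_psd gM_psd)) htwo
  · rw [ptr_smul, ptr_add, ptr14, ptr14, tau2_g, tau2_s, tau1_g, tau1_s]
    unfold Wcc rM
    simp only [sl3_add₁, sl3_add₂, sl3_add₃, sl3_sub₁, sl3_sub₂, sl3_sub₃,
      sl3_smul₁, sl3_smul₂, sl3_smul₃]
    module
  · exact (sl3_psd rM_psd ph_psd one_psd).add (sl3_psd rM_psd rM_psd ph_psd)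
  · exact psd_smul ((sl3_psd ph_psd gM_psd sM_psd).add (sl3_psd ph_psd sM_psd gM_psd)) htwo
  · rw [ptr_smul, ptr_add, ptr35, ptr35, tau2_g, tau2_s]
    unfold Wcc rM
    simp only [sl3_add₁, sl3_add₂, sl3_add₃, sl3_sub₁, sl3_sub₂, sl3_sub₃,
      sl3_smul₁, sl3_smul₂, sl3_smul₃]
    module
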